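/- If there exists a 𝔠-Lusin set and 𝔠 is a regular cardinal, then GES fails: there exist a sequence ⟨f_n⟩ of functions [0,1] → ℝ converging pointwise to 0 and an η > 0 such that every subset A ⊆ [0,1] on which ⟨f_n⟩ converges uniformly has Lebesgue outer measure μ*(A) ≤ 1 − η. -/

import Mathlib

open MeasureTheory Filter Set

/-- A `κ`-Lusin set: a subset of `ℝ` of cardinality `κ` all of whose meager subsets have
cardinality less than `κ`. -/
def IsLusinSet (κ : Cardinal) (L : Set ℝ) : Prop :=
  Cardinal.mk L = κ ∧ ∀ M ⊆ L, IsMeagre M → Cardinal.mk M < κ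

open Topology


noncomputable section
namespace Stmt15

lemma floor_two_mul_aux (y : ℝ) : 2 * ⌊y⌋ ≤ ⌊2 * y⌋ ∧ ⌊2 * y⌋ ≤ 2 * ⌊y⌋ + 1 := by
  constructor
  · apply Int.le_floor.2
    have := Int.floor_le y
    push_cast
    linarith
  · have h2 : (2:ℝ) * y < ((2 * ⌊y⌋ + 2 : ℤ) : ℝ) := by
      have := Int.lt_floor_add_one y
      push_cast
      linarith
    have := Int.floor_lt.2 h2
    omega

/-- k-th binary digit of x (as an integer in {0,1}). -/
def dig (k : ℕ) (x : ℝ) : ℤ := ⌊x * 2 ^ (k+1)⌋ - 2 * ⌊x * 2 ^ k⌋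

lemma key_rw (k : ℕ) (x : ℝ) : x * 2 ^ (k+1) = 2 * (x * 2 ^ k) := by ring

lemma dig_nonneg (k : ℕ) (x : ℝ) : 0 ≤ dig k x := by
  have := (floor_two_mul_aux (x * 2 ^ k)).1
  simp only [dig, key_rw]
  omega

lemma dig_le_one (k : ℕ) (x : ℝ) : dig k x ≤ 1 := by
  have := (floor_two_mul_aux (x * 2 ^ k)).2
  simp only [dig, key_rw]
  omega

lemma dig_eq_one_of_ne {k : ℕ} {x : ℝ} (h : dig k x ≠ 0) : dig k x = 1 := by
  have := dig_nonneg k x; have := dig_le_one k x; omega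

/-- number of 1-digits among the first n binary digits -/
def cnt (n : ℕ) (x : ℝ) : ℕ := ((Finset.range n).filter (fun k => dig k x = 1)).card

lemma cnt_mono {m n : ℕ} (h : m ≤ n) (x : ℝ) : cnt m x ≤ cnt n x :=
  Finset.card_le_card (Finset.filter_subset_filter _ (Finset.range_subset_range.2 h))

lemma cnt_le (n : ℕ) (x : ℝ) : cnt n x ≤ n := by
  simpa [cnt] using (Finset.card_filter_le (Finset.range n) _)

lemma cnt_succ_of_one {m : ℕ} {x : ℝ} (h : dig m x = 1) :
    cnt (m+1) x = cnt m x + 1 := by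
  simp [cnt, Finset.range_add_one, Finset.filter_insert, h]

end Stmt15

namespace Stmt15
open Stmt15

/-- reals whose binary digits are eventually 0 -/
def Dset : Set ℝ := {x | ∃ N, ∀ k ≥ N, dig k x = 0}

lemma cnt_tendsto {x : ℝ} (hx : x ∉ Dset) :
    Tendsto (fun n => cnt n x) atTop atTop := by
  apply Monotone.tendsto_atTop_atTop (fun a b hab => cnt_mono hab x)
  intro b
  induction b with
  | zero => exact ⟨0, Nat.zero_le _⟩
  | succ b ih =>
    obtain ⟨n, hn⟩ := ih
    have : ¬ (∀ k ≥ n, dig k x = 0) := fun h => hx ⟨n, h⟩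
    push_neg at this
    obtain ⟨m, hmn, hm⟩ := this
    refine ⟨m + 1, ?_⟩
    have := cnt_succ_of_one (dig_eq_one_of_ne hm)
    have h2 := cnt_mono hmn x
    omega

lemma floor_pow_eq {x : ℝ} {N : ℕ} (h : ∀ k ≥ N, dig k x = 0) :
    ∀ k ≥ N, ⌊x * 2 ^ k⌋ = 2 ^ (k - N) * ⌊x * 2 ^ N⌋ := by
  intro k hk
  induction k with
  | zero =>
    have : N = 0 := Nat.le_zero.mp hk
    simp [this]
  | succ k ih =>
    rcases Nat.lt_or_ge N (k+1) with h1 | h1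
    · have hkN : k ≥ N := Nat.lt_succ_iff.mp h1
      have hd := h k hkN
      have : ⌊x * 2 ^ (k+1)⌋ = 2 * ⌊x * 2 ^ k⌋ := by
        simp only [dig] at hd; omega
      rw [this, ih hkN]
      have : k + 1 - N = (k - N) + 1 := by omega
      rw [this, pow_succ]
      ring
    · have : N = k + 1 := le_antisymm hk h1
      simp [this]

lemma Dset_countable : Dset.Countable := by
  have hsub : Dset ⊆ Set.range (fun p : ℤ × ℕ => (p.1 : ℝ) / 2 ^ p.2) := by
    rintro x ⟨N, hN⟩
    refine ⟨(⌊x * 2 ^ N⌋, N), ?_⟩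
    simp only
    have hfl := floor_pow_eq hN
    have key : ∀ k ≥ N, 0 ≤ x - (⌊x * 2 ^ N⌋ : ℝ) / 2 ^ N ∧
        x - (⌊x * 2 ^ N⌋ : ℝ) / 2 ^ N < 1 / 2 ^ k := by
      intro k hk
      have h1 := Int.floor_le (x * 2 ^ k)
      have h2 := Int.lt_floor_add_one (x * 2 ^ k)
      rw [hfl k hk] at h1 h2
      have hpk : (0:ℝ) < 2 ^ k := by positivity
      have hpN : (0:ℝ) < 2 ^ N := by positivity
      have hcast : ((2 ^ (k - N) * ⌊x * 2 ^ N⌋ : ℤ) : ℝ)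
          = (⌊x * 2 ^ N⌋ : ℝ) / 2 ^ N * 2 ^ k := by
        push_cast
        rw [div_mul_eq_mul_div, eq_div_iff (ne_of_gt hpN)]
        rw [mul_comm ((2:ℝ) ^ (k-N)) _, mul_assoc, ← pow_add]
        congr 2
        omega
      rw [hcast] at h1 h2
      constructor
      · nlinarith
      · have : (x - (⌊x * 2 ^ N⌋:ℝ) / 2 ^ N) * 2 ^ k < 1 := by
          rw [sub_mul]; linarith
        calc x - (⌊x * 2 ^ N⌋:ℝ) / 2 ^ N
            = (x - (⌊x * 2 ^ N⌋:ℝ) / 2 ^ N) * 2 ^ k / 2 ^ k := by field_simp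
          _ < 1 / 2 ^ k := by
              apply div_lt_div_of_pos_right this hpk

    have h0 : 0 ≤ x - (⌊x * 2 ^ N⌋ : ℝ) / 2 ^ N := (key N le_rfl).1
    have hle : x - (⌊x * 2 ^ N⌋ : ℝ) / 2 ^ N ≤ 0 := by
      by_contra hpos
      push_neg at hpos
      obtain ⟨k, hk⟩ := pow_unbounded_of_one_lt (y := (2:ℝ))
        (1 / (x - (⌊x * 2 ^ N⌋ : ℝ) / 2 ^ N)) one_lt_two
      have h2 := (key (max k N) (le_max_right _ _)).2
      have hmono : (2:ℝ) ^ k ≤ 2 ^ (max k N) :=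
        pow_le_pow_right₀ one_le_two (le_max_left _ _)
      have : 1 / (2:ℝ) ^ (max k N) < x - (⌊x * 2 ^ N⌋ : ℝ) / 2 ^ N := by
        rw [div_lt_iff₀ (by positivity), ← div_lt_iff₀' hpos]
        calc 1 / (x - (⌊x * 2 ^ N⌋:ℝ) / 2 ^ N) < 2 ^ k := hk
        _ ≤ 2 ^ (max k N) := hmono
      linarith
    linarith [le_antisymm hle h0, h0]
  exact (Set.countable_range _).mono hsub

lemma floor_eq_on_interval {m : ℤ} {k N i : ℕ} (hki : k ≤ i) (hiN : i ≤ N) {x : ℝ}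
    (hx1 : (m:ℝ)/2^k < x) (hx2 : x < (m:ℝ)/2^k + (2^N:ℝ)⁻¹) :
    ⌊x * 2 ^ i⌋ = 2 ^ (i - k) * m := by
  rw [Int.floor_eq_iff]
  have hpk : (0:ℝ) < 2 ^ k := by positivity
  have hpi : (0:ℝ) < 2 ^ i := by positivity
  have hcast : ((2 ^ (i - k) * m : ℤ) : ℝ) = (m:ℝ)/2^k * 2^i := by
    push_cast
    rw [div_mul_eq_mul_div, eq_comm, div_eq_iff (ne_of_gt hpk), mul_comm ((2:ℝ)^(i-k)) _,
      mul_assoc, ← pow_add]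
    congr 2
    omega
  rw [hcast]
  constructor
  · nlinarith
  · have h2 : x * 2^i < ((m:ℝ)/2^k + (2^N:ℝ)⁻¹) * 2^i := by nlinarith
    have h3 : ((2:ℝ)^N)⁻¹ * 2^i ≤ 1 := by
      rw [inv_mul_le_iff₀ (by positivity), mul_one]
      exact pow_le_pow_right₀ one_le_two hiN
    nlinarith

lemma cnt_eq_on_interval {m : ℤ} {k N : ℕ} (hkN : k ≤ N) {x : ℝ}
    (hx1 : (m:ℝ)/2^k < x) (hx2 : x < (m:ℝ)/2^k + (2^N:ℝ)⁻¹) :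
    cnt N x ≤ k := by
  have hdig : ∀ i, k ≤ i → i < N → dig i x = 0 := by
    intro i hki hiN
    have h1 := floor_eq_on_interval hki (le_of_lt hiN) hx1 hx2
    have h2 := floor_eq_on_interval (le_trans hki (Nat.le_succ i)) hiN hx1 hx2
    simp only [dig, h1, h2]
    have : i + 1 - k = (i - k) + 1 := by omega
    rw [this, pow_succ]
    ring
  calc cnt N x ≤ cnt k x := by
        apply Finset.card_le_card
        intro j hj
        simp only [Finset.mem_filter, Finset.mem_range] at *
        refine ⟨?_, hj.2⟩
        by_contra hjk
        push_neg at hjk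
        have := hdig j hjk hj.1
        omega
  _ ≤ k := cnt_le k x

/-- the set of reals all of whose digit-counts obey the schedule g -/
def Tset (g : ℕ → ℕ) : Set ℝ := {x | ∀ j, j ≤ cnt (g j) x}

lemma isMeagre_Tset (g : ℕ → ℕ) : IsMeagre (Tset g) := by
  rw [isMeagre_iff_countable_union_isNowhereDense]
  refine ⟨{Tset g}, ?_, Set.countable_singleton _, by simp⟩
  rintro t rfl2
  simp only [Set.mem_singleton_iff] at rfl2
  subst rfl2
  -- nowhere dense
  rw [IsNowhereDense, Set.eq_empty_iff_forall_notMem]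
  intro y hy
  rw [mem_interior_iff_mem_nhds, Metric.mem_nhds_iff] at hy
  obtain ⟨ε, hε, hball⟩ := hy
  obtain ⟨k, hk⟩ := exists_pow_lt_of_lt_one (by positivity : (0:ℝ) < ε/2)
    (by norm_num : (1:ℝ)/2 < 1)
  have hk' : ((2:ℝ)^k)⁻¹ < ε/2 := by
    rwa [div_pow, one_pow, one_div] at hk
  set N := max (k+1) (g (k+1)) with hN
  set m : ℤ := ⌊(y - ε) * 2^k⌋ + 1 with hm
  set c0 : ℝ := (m:ℝ)/2^k with hc0
  have hpk : (0:ℝ) < 2^k := by positivity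
  have hpN : (0:ℝ) < 2^N := by positivity
  have hc0gt : y - ε < c0 := by
    rw [hc0, lt_div_iff₀ hpk, hm]
    push_cast
    exact Int.lt_floor_add_one _
  have hc0le : c0 ≤ (y - ε) + (2^k:ℝ)⁻¹ := by
    rw [hc0, div_le_iff₀ hpk, add_mul, inv_mul_cancel₀ (ne_of_gt hpk), hm]
    push_cast
    have := Int.floor_le ((y - ε) * 2^k)
    linarith
  have hNk : (2^N:ℝ)⁻¹ ≤ (2^k:ℝ)⁻¹ := by
    apply inv_anti₀ hpk
    exact pow_le_pow_right₀ one_le_two (le_trans (Nat.le_succ k) (le_max_left _ _))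
  -- J ⊆ ball y ε
  have hJball : Set.Ioo c0 (c0 + (2^N:ℝ)⁻¹) ⊆ Metric.ball y ε := by
    intro x hx
    obtain ⟨hxl, hxr⟩ := hx
    rw [Metric.mem_ball, Real.dist_eq, abs_lt]
    constructor <;> nlinarith
  -- J meets Tset g
  have hx0 : c0 + (2^N:ℝ)⁻¹/2 ∈ closure (Tset g) := by
    apply hball
    apply hJball
    constructor
    · linarith [half_pos (by positivity : (0:ℝ) < (2^N:ℝ)⁻¹)]
    · linarith [half_lt_self (by positivity : (0:ℝ) < (2^N:ℝ)⁻¹)]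
  rw [mem_closure_iff] at hx0
  obtain ⟨x, hxJ, hxT⟩ := hx0 (Set.Ioo c0 (c0 + (2^N:ℝ)⁻¹)) isOpen_Ioo
    ⟨by linarith [half_pos (by positivity : (0:ℝ) < (2^N:ℝ)⁻¹)],
     by linarith [half_lt_self (by positivity : (0:ℝ) < (2^N:ℝ)⁻¹)]⟩
  have hcnt : cnt N x ≤ k :=
    cnt_eq_on_interval (le_trans (Nat.le_succ k) (le_max_left _ _)) hxJ.1 hxJ.2
  have hT := hxT (k+1)
  have hmon : cnt (g (k+1)) x ≤ cnt N x := cnt_mono (le_max_right (k+1) (g (k+1))) x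
  omega

end Stmt15

namespace Stmt15

lemma meagre_of_nwd {s : Set ℝ} (h : IsNowhereDense s) : IsMeagre s := by
  rw [isMeagre_iff_countable_union_isNowhereDense]
  exact ⟨{s}, by rintro t ht; simp only [Set.mem_singleton_iff] at ht; subst ht; exact h,
    Set.countable_singleton _, by simp⟩

universe u

lemma isRegular_continuum_zero (h : Cardinal.IsRegular.{u} Cardinal.continuum) :
    Cardinal.IsRegular.{0} Cardinal.continuum := by
  refine ⟨Cardinal.aleph0_le_continuum, ?_⟩
  have h2 := h.2
  have h3 : Cardinal.lift.{u,0} Cardinal.continuum.{0} ≤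
      Cardinal.lift.{u,0} (Cardinal.continuum.{0}.ord.cof) := by
    rw [Ordinal.lift_cof, Cardinal.lift_ord, Cardinal.lift_continuum]
    exact h2
  exact Cardinal.lift_le.mp h3

lemma null_of_small (hL : ∃ L : Set ℝ, IsLusinSet Cardinal.continuum L)
    (hreg : Cardinal.IsRegular.{0} Cardinal.continuum) (A : Set ℝ)
    (hA : Cardinal.mk A < Cardinal.continuum) : volume A = 0 := by
  obtain ⟨L, hLcard, hLusin⟩ := hL
  -- dense open sets of small measure
  set U : ℕ → Set ℝ := fun n => ⋃ k, Metric.ball ((Denumerable.ofNat ℚ k : ℚ) : ℝ)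
    ((2:ℝ)^(n+k+1))⁻¹ with hU
  have hUopen : ∀ n, IsOpen (U n) := fun n => isOpen_iUnion fun k => Metric.isOpen_ball
  have hUdense : ∀ n, Dense (U n) := by
    intro n
    apply Rat.denseRange_cast.mono
    rintro x ⟨q, rfl⟩
    refine Set.mem_iUnion.2 ⟨@Encodable.encode ℚ (Denumerable.toEncodable) q, ?_⟩
    rw [Denumerable.ofNat_encode]
    exact Metric.mem_ball_self (by positivity)
  have hUmeas : ∀ n, volume (U n) ≤ ENNReal.ofReal (((2:ℝ)^n)⁻¹ * 2) := by
    intro n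
    calc volume (U n) ≤ ∑' k, volume (Metric.ball ((Denumerable.ofNat ℚ k : ℚ) : ℝ)
        ((2:ℝ)^(n+k+1))⁻¹) := measure_iUnion_le _
    _ = ∑' k : ℕ, ENNReal.ofReal (2 * ((2:ℝ)^(n+k+1))⁻¹) := by
        simp [Real.volume_ball]
    _ = ENNReal.ofReal (∑' k : ℕ, 2 * ((2:ℝ)^(n+k+1))⁻¹) := by
        rw [← ENNReal.ofReal_tsum_of_nonneg]
        · intro k; positivity
        · apply Summable.mul_left
          have : (fun k : ℕ => ((2:ℝ)^(n+k+1))⁻¹) = fun k : ℕ =>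
              ((2:ℝ)^(n+1))⁻¹ * ((2:ℝ)⁻¹)^k := by
            funext k
            rw [← inv_pow, ← inv_pow, ← pow_add]
            congr 1
            omega
          rw [this]
          exact (summable_geometric_of_lt_one (by norm_num) (by norm_num)).mul_left _
    _ ≤ ENNReal.ofReal (((2:ℝ)^n)⁻¹ * 2) := by
        apply ENNReal.ofReal_le_ofReal
        have heq : ∀ k : ℕ, 2 * ((2:ℝ)^(n+k+1))⁻¹ = ((2:ℝ)^n)⁻¹ * ((2:ℝ)⁻¹)^k := by
          intro k
          rw [inv_pow, ← mul_inv, ← pow_add]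
          rw [show (2:ℝ)^(n+k+1) = 2^(n+k) * 2 by rw [pow_succ]]
          rw [mul_inv]
          ring
        rw [tsum_congr heq, tsum_mul_left, tsum_geometric_of_lt_one (by norm_num) (by norm_num)]
        norm_num
  set G : Set ℝ := ⋂ n, U n with hG
  have hGmeas : MeasurableSet G := MeasurableSet.iInter fun n => (hUopen n).measurableSet
  have hGnull : volume G = 0 := by
    have htend : Tendsto (fun n : ℕ => ENNReal.ofReal (((2:ℝ)^n)⁻¹ * 2)) atTop (𝓝 0) := by
      have hr : Tendsto (fun n : ℕ => ((2:ℝ)^n)⁻¹ * 2) atTop (𝓝 0) := by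
        have := (tendsto_pow_atTop_nhds_zero_of_lt_one (by norm_num : (0:ℝ) ≤ 2⁻¹)
          (by norm_num : (2:ℝ)⁻¹ < 1)).mul_const (2:ℝ)
        simpa [inv_pow] using this
      have := ENNReal.tendsto_ofReal hr
      simpa using this
    refine le_antisymm ?_ zero_le
    refine ge_of_tendsto htend (Filter.Eventually.of_forall fun n => ?_)
    exact le_trans (measure_mono (Set.iInter_subset U n)) (hUmeas n)
  -- bad sets
  set Bad : ℝ → Set ℝ := fun a => ⋃ n, (fun t => t - a) ⁻¹' (U n)ᶜ with hBad
  have hBadMeagre : ∀ a, IsMeagre (Bad a) := by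
    intro a
    apply isMeagre_iUnion
    intro n
    apply meagre_of_nwd
    have hcl : IsClosed ((fun t : ℝ => t - a) ⁻¹' (U n)ᶜ) :=
      (hUopen n).isClosed_compl.preimage (continuous_sub_right a)
    rw [hcl.isNowhereDense_iff]
    have : (fun t : ℝ => t - a) = (Homeomorph.subRight a) := rfl
    rw [this, ← Homeomorph.preimage_interior, interior_compl, (hUdense n).closure_eq,
      Set.compl_univ, Set.preimage_empty]
  -- find a translate point in L
  have hnotsub : ¬ (L ⊆ ⋃ a : A, Bad a) := by
    intro hsub
    have h1 : Cardinal.mk L ≤ Cardinal.mk (⋃ a : A, L ∩ Bad a) := by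
      apply Cardinal.mk_le_mk_of_subset
      intro x hx
      obtain ⟨s, ⟨a, rfl⟩, hxs⟩ := hsub hx
      exact Set.mem_iUnion.2 ⟨a, hx, hxs⟩
    have h2 : Cardinal.mk (⋃ a : A, L ∩ Bad a) ≤
        Cardinal.mk A * ⨆ a : A, Cardinal.mk (L ∩ Bad a : Set ℝ) :=
      Cardinal.mk_iUnion_le _
    have h3 : ∀ a : A, Cardinal.mk (L ∩ Bad a : Set ℝ) < Cardinal.continuum := by
      intro a
      exact hLusin _ Set.inter_subset_left ((hBadMeagre a).mono Set.inter_subset_right)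
    have h4 : (⨆ a : A, Cardinal.mk (L ∩ Bad a : Set ℝ)) < Cardinal.continuum :=
      Cardinal.iSup_lt_of_isRegular hreg hA h3
    have h5 : Cardinal.mk A * (⨆ a : A, Cardinal.mk (L ∩ Bad a : Set ℝ)) <
        Cardinal.continuum :=
      Cardinal.mul_lt_of_lt hreg.aleph0_le hA h4
    rw [hLcard] at h1
    exact absurd (lt_of_le_of_lt (le_trans h1 h2) h5) (lt_irrefl _)
  obtain ⟨t, htL, htBad⟩ := Set.not_subset.mp hnotsub
  -- A is contained in a null set
  have hAsub : A ⊆ (fun x => t - x) ⁻¹' G := by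
    intro a ha
    simp only [Set.mem_preimage]
    by_contra hcon
    apply htBad
    rw [hG] at hcon
    simp only [Set.mem_iInter, not_forall] at hcon
    obtain ⟨n, hn⟩ := hcon
    exact Set.mem_iUnion.2 ⟨⟨a, ha⟩, Set.mem_iUnion.2 ⟨n, hn⟩⟩
  have hpre : volume ((fun x : ℝ => t - x) ⁻¹' G) = volume G := by
    have : (fun x : ℝ => t - x) ⁻¹' G = Neg.neg ⁻¹' ((fun z : ℝ => t + z) ⁻¹' G) := by
      ext x; simp [sub_eq_add_neg]
    rw [this, Measure.measure_preimage_neg, measure_preimage_add]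
  refine le_antisymm ?_ zero_le
  calc volume A ≤ volume ((fun x : ℝ => t - x) ⁻¹' G) := measure_mono hAsub
  _ = 0 := by rw [hpre, hGnull]

end Stmt15



open Stmt15 in
/-- If there exists a `𝔠`-Lusin set and `𝔠` is regular, then `GES`
fails. -/
theorem stmt15 (hL : ∃ L : Set ℝ, IsLusinSet Cardinal.continuum L)
    (hreg : Cardinal.continuum.IsRegular) :
    ∃ f : ℕ → ℝ → ℝ,
      (∀ x ∈ Set.Icc (0:ℝ) 1, Tendsto (fun n => f n x) atTop (nhds 0)) ∧
      ∃ η : ℝ, 0 < η ∧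
        ∀ A ⊆ Set.Icc (0:ℝ) 1, TendstoUniformlyOn f 0 atTop A →
          volume A ≤ ENNReal.ofReal (1 - η) := by
  classical
  have hreg0 := isRegular_continuum_zero hreg
  obtain ⟨L, hLcard, hLusin⟩ := hL
  -- the Lusin set minus the countable set of eventually-zero-digit reals
  have hLD : Cardinal.mk (L \ Dset : Set ℝ) = Cardinal.continuum := by
    refine le_antisymm ?_ ?_
    · rw [← hLcard]
      exact Cardinal.mk_le_mk_of_subset Set.diff_subset
    · by_contra hlt
      push_neg at hlt
      have hsub : L ⊆ (L \ Dset) ∪ (L ∩ Dset) := by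
        intro x hx
        by_cases hxD : x ∈ Dset
        · exact Or.inr ⟨hx, hxD⟩
        · exact Or.inl ⟨hx, hxD⟩
      have h1 : Cardinal.mk L ≤ Cardinal.mk ((L \ Dset) ∪ (L ∩ Dset) : Set ℝ) :=
        Cardinal.mk_le_mk_of_subset hsub
      have h2 : Cardinal.mk ((L \ Dset) ∪ (L ∩ Dset) : Set ℝ) ≤
          Cardinal.mk (L \ Dset : Set ℝ) + Cardinal.mk (L ∩ Dset : Set ℝ) :=
        Cardinal.mk_union_le _ _
      have h3 : Cardinal.mk (L ∩ Dset : Set ℝ) ≤ Cardinal.aleph0 := by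
        rw [Cardinal.mk_le_aleph0_iff]
        exact (Dset_countable.mono Set.inter_subset_right).to_subtype
      have h4 : Cardinal.mk (L \ Dset : Set ℝ) + Cardinal.mk (L ∩ Dset : Set ℝ) <
          Cardinal.continuum :=
        Cardinal.add_lt_of_lt Cardinal.aleph0_le_continuum hlt
          (lt_of_le_of_lt h3 Cardinal.aleph0_lt_continuum)
      rw [hLcard] at h1
      exact absurd (lt_of_le_of_lt (le_trans h1 h2) h4) (lt_irrefl _)
  have hIcc : Cardinal.mk (Set.Icc (0:ℝ) 1) = Cardinal.continuum :=
    Cardinal.mk_Icc_real zero_lt_one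
  obtain ⟨e⟩ : Nonempty ((Set.Icc (0:ℝ) 1) ≃ (L \ Dset : Set ℝ)) :=
    Cardinal.eq.mp (by rw [hIcc, hLD])
  refine ⟨fun n t => if h : t ∈ Set.Icc (0:ℝ) 1 then
      ((cnt n ((e ⟨t, h⟩ : (L \ Dset : Set ℝ)) : ℝ) : ℝ) + 1)⁻¹ else 0, ?_, 1/2,
    by norm_num, ?_⟩
  · intro x hx
    have hnot : ((e ⟨x, hx⟩ : (L \ Dset : Set ℝ)) : ℝ) ∉ Dset := (e ⟨x, hx⟩).2.2
    have hc := cnt_tendsto hnot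
    have h1 : Tendsto (fun n =>
        ((cnt n ((e ⟨x, hx⟩ : (L \ Dset : Set ℝ)) : ℝ) : ℝ) + 1)) atTop atTop :=
      tendsto_atTop_add_const_right _ 1 (tendsto_natCast_atTop_atTop.comp hc)
    have h2 := h1.inv_tendsto_atTop
    exact h2.congr (fun n => by simp only [Pi.inv_apply, dif_pos hx])
  · intro A hA hunif
    rw [Metric.tendstoUniformlyOn_iff] at hunif
    have hj : ∀ j : ℕ, ∃ N : ℕ, ∀ n ≥ N, ∀ x ∈ A,
        dist ((0:ℝ→ℝ) x) (if h : x ∈ Set.Icc (0:ℝ) 1 then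
          ((cnt n ((e ⟨x, h⟩ : (L \ Dset : Set ℝ)) : ℝ) : ℝ) + 1)⁻¹ else 0) < ((j:ℝ)+1)⁻¹ :=
      fun j => eventually_atTop.mp (hunif _ (by positivity))
    choose g hg using hj
    -- every point of A maps into Tset g
    have hmem : ∀ x (hx : x ∈ A), ((e ⟨x, hA hx⟩ : (L \ Dset : Set ℝ)) : ℝ) ∈ Tset g := by
      intro x hx j
      have hd := hg j (g j) le_rfl x hx
      rw [dif_pos (hA hx)] at hd
      set c := cnt (g j) ((e ⟨x, hA hx⟩ : (L \ Dset : Set ℝ)) : ℝ) with hcdef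
      have hd' : ((c:ℝ)+1)⁻¹ < ((j:ℝ)+1)⁻¹ := by
        have : dist ((0:ℝ→ℝ) x) (((c:ℝ)+1)⁻¹) = ((c:ℝ)+1)⁻¹ := by
          simp [Real.dist_eq, abs_of_nonneg]
          positivity
        rw [this] at hd
        exact hd
      have hlt : (j:ℝ) + 1 < (c:ℝ) + 1 := by
        by_contra hcon
        push_neg at hcon
        have := inv_anti₀ (by positivity : (0:ℝ) < (c:ℝ)+1) hcon
        linarith
      have : (j:ℕ) < c := by exact_mod_cast (by linarith : (j:ℝ) < (c:ℝ))
      omega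
    -- the image of A inside L is meagre, hence small
    set E : Set ℝ := Set.range (fun x : A => ((e ⟨x.1, hA x.2⟩ : (L \ Dset : Set ℝ)) : ℝ))
      with hE
    have hET : E ⊆ Tset g := by
      rintro y ⟨x, rfl⟩
      exact hmem x.1 x.2
    have hEL : E ⊆ L := by
      rintro y ⟨x, rfl⟩
      exact (e ⟨x.1, hA x.2⟩).2.1
    have hEsmall : Cardinal.mk E < Cardinal.continuum :=
      hLusin E hEL ((isMeagre_Tset g).mono hET)
    have hinj : Function.Injective (fun x : A => ((e ⟨x.1, hA x.2⟩ : (L \ Dset : Set ℝ)) : ℝ)) := by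
      intro x y hxy
      have h1 : (e ⟨x.1, hA x.2⟩ : (L \ Dset : Set ℝ)) = e ⟨y.1, hA y.2⟩ := Subtype.ext hxy
      have h2 : (⟨x.1, hA x.2⟩ : Set.Icc (0:ℝ) 1) = ⟨y.1, hA y.2⟩ := e.injective h1
      have h3 : x.1 = y.1 := congrArg (Subtype.val : (Set.Icc (0:ℝ) 1) → ℝ) h2
      exact Subtype.ext h3
    have hAcard : Cardinal.mk A < Cardinal.continuum := by
      rwa [hE, Cardinal.mk_range_eq _ hinj] at hEsmall
    have := null_of_small ⟨L, hLcard, hLusin⟩ hreg0 A hAcard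
    rw [this]
    exact zero_le

end
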